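/- Let p be a probability measure on ℝ with finite first and second moments and mean μ, let σ² ∈ (0, 1], and let 0 ≤ L < 1. Define f*(x) = (1 − σ²)·x if 1 − σ² ≤ L, and f*(x) = L·x + (1 − σ² − L)·μ if 1 − σ² > L. Then f* minimizes F(f) = ∫ |(1 − σ²)·x − f(x)|² dp(x) among all Lipschitz functions f : ℝ → ℝ with Lipschitz constant at most L, i.e. F(f) ≥ F(f*) for every such f. Moreover, any minimizer coincides with f* almost everywhere on the support of p, and in the case 1 − σ² > L any minimizer coincides with f* on the convex hull of the support of p. -/

import Mathlib

open MeasureTheory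

/-- The minimizer of the approximation training over Lipschitz functions with
constant at most `L`: `f*(x) = (1 - s)x` if `1 - s ≤ L`, and
`f*(x) = Lx + (1 - s - L)μ` otherwise (`s = σ²`, `μ` the prior mean). -/
noncomputable def approxMinimizer (s L μ : ℝ) : ℝ → ℝ := fun x =>
  if 1 - s ≤ L then (1 - s) * x else L * x + (1 - s - L) * μ

/-- The (topological) support of a measure on `ℝ`: points all of whose
neighbourhoods have nonzero measure. -/
def measSupport (p : Measure ℝ) : Set ℝ := {x | ∀ U ∈ nhds x, p U ≠ 0}

private lemma lip_lipschitzWith {L : ℝ} (hL0 : 0 ≤ L) {f : ℝ → ℝ}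
    (hf : ∀ a b : ℝ, |f a - f b| ≤ L * |a - b|) :
    LipschitzWith ⟨L, hL0⟩ f :=
  LipschitzWith.of_dist_le_mul fun a b => by
    show dist (f a) (f b) ≤ L * dist a b; simpa [Real.dist_eq] using hf a b

private lemma lip_sq_integrable (p : Measure ℝ) [IsProbabilityMeasure p]
    (h1 : Integrable (fun x => x) p) (h2 : Integrable (fun x => x ^ 2) p)
    {L : ℝ} (hL0 : 0 ≤ L) {f : ℝ → ℝ}
    (hf : ∀ a b : ℝ, |f a - f b| ≤ L * |a - b|) (k : ℝ) :
    Integrable (fun x => (k * x - f x) ^ 2) p := by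
  have hc := (lip_lipschitzWith hL0 hf).continuous
  have hbound : Integrable
      (fun x => (|k| + L) ^ 2 * x ^ 2 + (2 * (|k| + L) * |f 0| * |x| + |f 0| ^ 2)) p :=
    (h2.const_mul _).add ((h1.abs.const_mul _).add (integrable_const _))
  refine hbound.mono ?_ ?_
  · exact (((continuous_const.mul continuous_id).sub hc).pow 2).aestronglyMeasurable
  · filter_upwards with x
    have h0 : |f x| ≤ |f 0| + L * |x| := by
      have h' := hf x 0
      rw [sub_zero] at h'
      have h'' := abs_sub_abs_le_abs_sub (f x) (f 0)
      linarith
    have hkx : |k * x| = |k| * |x| := abs_mul _ _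
    have h1' : |k * x - f x| ≤ (|k| + L) * |x| + |f 0| := by
      have := abs_sub (k * x) (f x)
      nlinarith [abs_nonneg x]
    have hsq : (k * x - f x) ^ 2 ≤ ((|k| + L) * |x| + |f 0|) ^ 2 := by
      have := pow_le_pow_left₀ (abs_nonneg (k * x - f x)) h1' 2
      rwa [sq_abs] at this
    have hx2 : |x| ^ 2 = x ^ 2 := sq_abs x
    rw [Real.norm_eq_abs, Real.norm_eq_abs, abs_of_nonneg (sq_nonneg _),
      abs_of_nonneg (by positivity)]
    nlinarith [hsq]

private lemma integrable_mul_of_sq (p : Measure ℝ) {u v : ℝ → ℝ}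
    (hu : Integrable (fun x => u x ^ 2) p) (hv : Integrable (fun x => v x ^ 2) p)
    (hcu : Continuous u) (hcv : Continuous v) :
    Integrable (fun x => u x * v x) p := by
  have hbound : Integrable (fun x => (1/2 : ℝ) * (u x ^ 2 + v x ^ 2)) p :=
    (hu.add hv).const_mul _
  refine hbound.mono (hcu.mul hcv).aestronglyMeasurable ?_
  filter_upwards with x
  have hb : (0:ℝ) ≤ 1/2 * (u x ^ 2 + v x ^ 2) := by positivity
  rw [Real.norm_eq_abs, Real.norm_eq_abs, abs_of_nonneg hb, abs_mul]
  nlinarith [sq_nonneg (|u x| - |v x|), sq_abs (u x), sq_abs (v x), abs_nonneg (u x), abs_nonneg (v x)]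

/-- **Approximation training over Lipschitz functions (Theorem 3.3).** Let `p`
be a probability measure on `ℝ` with finite first and second moments and mean
`μ`, `s = σ² ∈ (0,1]`, `0 ≤ L < 1`. Then `f*` minimizes
`F(f) = ∫ |(1 - s)x - f(x)|² dp` among `L`-Lipschitz functions; any minimizer
coincides with `f*` `p`-a.e. (i.e. a.e. on the support of `p`), and if
`1 - s > L` any minimizer coincides with `f*` on the convex hull of the
support of `p`. -/
theorem approx_training_lipschitz_minimizer
    (p : Measure ℝ) [IsProbabilityMeasure p]
    (h1 : Integrable (fun x => x) p) (h2 : Integrable (fun x => x ^ 2) p)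
    (s L : ℝ) (hs0 : 0 < s) (hs1 : s ≤ 1) (hL0 : 0 ≤ L) (hL1 : L < 1) :
    (∀ f : ℝ → ℝ, (∀ a b : ℝ, |f a - f b| ≤ L * |a - b|) →
        ∫ x, ((1 - s) * x - approxMinimizer s L (∫ y, y ∂p) x) ^ 2 ∂p ≤
          ∫ x, ((1 - s) * x - f x) ^ 2 ∂p) ∧
    (∀ f : ℝ → ℝ, (∀ a b : ℝ, |f a - f b| ≤ L * |a - b|) →
        (∫ x, ((1 - s) * x - f x) ^ 2 ∂p) ≤
          ∫ x, ((1 - s) * x - approxMinimizer s L (∫ y, y ∂p) x) ^ 2 ∂p →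
        ∀ᵐ x ∂p, f x = approxMinimizer s L (∫ y, y ∂p) x) ∧
    (L < 1 - s →
      ∀ f : ℝ → ℝ, (∀ a b : ℝ, |f a - f b| ≤ L * |a - b|) →
        (∫ x, ((1 - s) * x - f x) ^ 2 ∂p) ≤
          ∫ x, ((1 - s) * x - approxMinimizer s L (∫ y, y ∂p) x) ^ 2 ∂p →
        ∀ x ∈ convexHull ℝ (measSupport p),
          f x = approxMinimizer s L (∫ y, y ∂p) x) := by
  obtain ⟨μ, hμdef⟩ : ∃ m : ℝ, (∫ y, y ∂p) = m := ⟨_, rfl⟩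
  rw [hμdef]
  have hμconst : Integrable (fun _ : ℝ => μ) p := integrable_const μ
  have hmean : ∫ x, (x - μ) ∂p = 0 := by
    rw [integral_sub h1 hμconst, integral_const, probReal_univ, one_smul,
      hμdef, sub_self]
  have hconstlip : ∀ u v : ℝ, |(fun _ : ℝ => μ) u - (fun _ : ℝ => μ) v| ≤ L * |u - v| := by
    intro u v; simp; positivity
  have hV2 : Integrable (fun x => (x - μ) ^ 2) p := by
    simpa using lip_sq_integrable p h1 h2 hL0 hconstlip 1
  have hVnn : (0:ℝ) ≤ ∫ x, (x - μ) ^ 2 ∂p := integral_nonneg fun x => sq_nonneg _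
  -- the combined statement for parts 1 and 2
  have main : ∀ f : ℝ → ℝ, (∀ a b : ℝ, |f a - f b| ≤ L * |a - b|) →
      (∫ x, ((1 - s) * x - approxMinimizer s L μ x) ^ 2 ∂p ≤
          ∫ x, ((1 - s) * x - f x) ^ 2 ∂p) ∧
      ((∫ x, ((1 - s) * x - f x) ^ 2 ∂p) ≤
          ∫ x, ((1 - s) * x - approxMinimizer s L μ x) ^ 2 ∂p →
        ∀ᵐ x ∂p, f x = approxMinimizer s L μ x) := by
    intro f hf
    have hcontf := (lip_lipschitzWith hL0 hf).continuous
    have hg2 : Integrable (fun x => ((1 - s) * x - f x) ^ 2) p :=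
      lip_sq_integrable p h1 h2 hL0 hf (1 - s)
    by_cases hcase : 1 - s ≤ L
    · -- easy case: f* x = (1-s) x, optimum value 0
      have hfst : ∀ x : ℝ, approxMinimizer s L μ x = (1 - s) * x := fun x => if_pos hcase
      have hzero : ∫ x, ((1 - s) * x - approxMinimizer s L μ x) ^ 2 ∂p = 0 := by
        simp [hfst]
      constructor
      · rw [hzero]; exact integral_nonneg fun x => sq_nonneg _
      · intro hle
        rw [hzero] at hle
        have h0 : ∫ x, ((1 - s) * x - f x) ^ 2 ∂p = 0 :=
          le_antisymm hle (integral_nonneg fun x => sq_nonneg _)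
        have hae := (integral_eq_zero_iff_of_nonneg (fun x => sq_nonneg _) hg2).mp h0
        filter_upwards [hae] with x hx
        have hx' : ((1 - s) * x - f x) ^ 2 = 0 := hx
        have := (pow_eq_zero_iff (two_ne_zero)).mp hx'
        rw [hfst x]; linarith
    · -- hard case: L < 1 - s
      have ha : (0:ℝ) < 1 - s - L := by
        rw [not_le] at hcase; linarith
      have hfst : ∀ x : ℝ, approxMinimizer s L μ x = L * x + (1 - s - L) * μ :=
        fun x => if_neg hcase
      have hE : Integrable (fun x => (((1 - s) * x - f x) - (1 - s - L) * (x - μ)) ^ 2) p := by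
        have hf' : ∀ u v : ℝ, |(f u - (1 - s - L) * μ) - (f v - (1 - s - L) * μ)|
            ≤ L * |u - v| := by intro u v; simpa using hf u v
        have h := lip_sq_integrable p h1 h2 hL0 hf' L
        have heq : (fun x => (((1 - s) * x - f x) - (1 - s - L) * (x - μ)) ^ 2)
            = fun x => (L * x - (f x - (1 - s - L) * μ)) ^ 2 := by
          funext x; ring
        rw [heq]; exact h
      have hxg : Integrable (fun x => (x - μ) * ((1 - s) * x - f x)) p := by
        refine integrable_mul_of_sq p hV2 hg2 (continuous_id.sub continuous_const) ?_
        exact (continuous_const.mul continuous_id).sub hcontf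
      have hgμ : Integrable (fun x => ((1 - s) * μ - f μ) * (x - μ)) p :=
        (h1.sub hμconst).const_mul _
      -- covariance lower bound
      have hCV : (1 - s - L) * (∫ x, (x - μ) ^ 2 ∂p)
          ≤ ∫ x, (x - μ) * ((1 - s) * x - f x) ∂p := by
        have hmono : ∫ x, (1 - s - L) * (x - μ) ^ 2 ∂p
            ≤ ∫ x, ((x - μ) * ((1 - s) * x - f x) - ((1 - s) * μ - f μ) * (x - μ)) ∂p := by
          refine integral_mono (hV2.const_mul _) (hxg.sub hgμ) ?_
          intro x
          have h := hf x μ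
          have h2' : (x - μ) * (f x - f μ) ≤ L * (x - μ) ^ 2 := by
            calc (x - μ) * (f x - f μ) ≤ |(x - μ) * (f x - f μ)| := le_abs_self _
              _ = |x - μ| * |f x - f μ| := abs_mul _ _
              _ ≤ |x - μ| * (L * |x - μ|) :=
                  mul_le_mul_of_nonneg_left h (abs_nonneg _)
              _ = L * (x - μ) ^ 2 := by rw [show |x - μ| * (L * |x - μ|) = L * (|x - μ| ^ 2) by ring, sq_abs]
          simp only []
          nlinarith [h2']
        rw [integral_const_mul] at hmono
        rw [integral_sub hxg hgμ, integral_const_mul, hmean, mul_zero, sub_zero] at hmono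
        exact hmono
      -- splitting identity
      have hsplit : ∫ x, ((1 - s) * x - f x) ^ 2 ∂p
          = (∫ x, (((1 - s) * x - f x) - (1 - s - L) * (x - μ)) ^ 2 ∂p)
            + (2 * (1 - s - L) * ∫ x, (x - μ) * ((1 - s) * x - f x) ∂p
              - (1 - s - L) ^ 2 * ∫ x, (x - μ) ^ 2 ∂p) := by
        have hid : (fun x => ((1 - s) * x - f x) ^ 2)
            = fun x => (((1 - s) * x - f x) - (1 - s - L) * (x - μ)) ^ 2
                + (2 * (1 - s - L) * ((x - μ) * ((1 - s) * x - f x))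
                  - (1 - s - L) ^ 2 * (x - μ) ^ 2) := by
          funext x; ring
        have hI2 : Integrable (fun x => 2 * (1 - s - L) * ((x - μ) * ((1 - s) * x - f x))
            - (1 - s - L) ^ 2 * (x - μ) ^ 2) p :=
          (hxg.const_mul (2 * (1 - s - L))).sub (hV2.const_mul ((1 - s - L) ^ 2))
        have hIa : Integrable (fun x => 2 * (1 - s - L) * ((x - μ) * ((1 - s) * x - f x))) p :=
          hxg.const_mul (2 * (1 - s - L))
        have hIb : Integrable (fun x => (1 - s - L) ^ 2 * (x - μ) ^ 2) p :=
          hV2.const_mul ((1 - s - L) ^ 2)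
        rw [hid, integral_add hE hI2, integral_sub hIa hIb,
          integral_const_mul, integral_const_mul]
      have hEnn : (0:ℝ) ≤ ∫ x, (((1 - s) * x - f x) - (1 - s - L) * (x - μ)) ^ 2 ∂p :=
        integral_nonneg fun x => sq_nonneg _
      have hFstar : ∫ x, ((1 - s) * x - approxMinimizer s L μ x) ^ 2 ∂p
          = (1 - s - L) ^ 2 * ∫ x, (x - μ) ^ 2 ∂p := by
        simp only [hfst]
        have heq : (fun x => ((1 - s) * x - (L * x + (1 - s - L) * μ)) ^ 2)
            = fun x => (1 - s - L) ^ 2 * (x - μ) ^ 2 := by funext x; ring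
        rw [heq, integral_const_mul]
      constructor
      · rw [hFstar, hsplit]
        nlinarith [hEnn, mul_nonneg ha.le (sub_nonneg.mpr hCV)]
      · intro hle
        rw [hFstar] at hle
        rw [hsplit] at hle
        have hE0 : ∫ x, (((1 - s) * x - f x) - (1 - s - L) * (x - μ)) ^ 2 ∂p = 0 := by
          have := mul_nonneg ha.le (sub_nonneg.mpr hCV)
          nlinarith
        have hae := (integral_eq_zero_iff_of_nonneg (fun x => sq_nonneg _) hE).mp hE0
        filter_upwards [hae] with x hx
        have hx' : (((1 - s) * x - f x) - (1 - s - L) * (x - μ)) ^ 2 = 0 := hx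
        have hx'' := (pow_eq_zero_iff (two_ne_zero)).mp hx'
        rw [hfst x]
        linear_combination -hx''
  refine ⟨fun f hf => (main f hf).1, fun f hf => (main f hf).2, ?_⟩
  -- part 3
  intro hLc f hf hle
  have hae := (main f hf).2 hle
  have hcase : ¬ (1 - s ≤ L) := not_le.mpr hLc
  have hfst : ∀ x : ℝ, approxMinimizer s L μ x = L * x + (1 - s - L) * μ :=
    fun x => if_neg hcase
  have hcontf := (lip_lipschitzWith hL0 hf).continuous
  have hcontφ : Continuous (fun x : ℝ => L * x + (1 - s - L) * μ) :=
    ((continuous_const.mul continuous_id).add continuous_const)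
  have hae' : ∀ᵐ x ∂p, f x = L * x + (1 - s - L) * μ := by
    filter_upwards [hae] with x hx
    rw [hx, hfst x]
  have hU : p {y : ℝ | f y ≠ L * y + (1 - s - L) * μ} = 0 := by
    rw [MeasureTheory.ae_iff] at hae'
    exact hae'
  have hsub : measSupport p ⊆ {x : ℝ | f x = L * x + (1 - s - L) * μ} := by
    intro x hx
    simp only [Set.mem_setOf_eq]
    by_contra hne
    exact hx _ ((isOpen_ne_fun hcontf hcontφ).mem_nhds hne) hU
  have hT : Convex ℝ {x : ℝ | f x = L * x + (1 - s - L) * μ} := by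
    rw [convex_iff_ordConnected]
    refine ⟨fun u hu v hv z hz => ?_⟩
    simp only [Set.mem_setOf_eq] at hu hv ⊢
    have h1' : f z ≤ L * z + (1 - s - L) * μ := by
      have h := hf z u
      rw [abs_of_nonneg (by linarith [hz.1] : (0:ℝ) ≤ z - u)] at h
      have h' := le_abs_self (f z - f u)
      nlinarith [h, h', hu]
    have h2' : L * z + (1 - s - L) * μ ≤ f z := by
      have h := hf v z
      rw [abs_of_nonneg (by linarith [hz.2] : (0:ℝ) ≤ v - z)] at h
      have h' := le_abs_self (f v - f z)
      nlinarith [h, h', hv]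
    exact le_antisymm h1' h2'
  intro x hx
  rw [hfst x]
  exact convexHull_min hsub hT hx
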